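/- The word x = a₁ b a₂ b² a₃ b³ ⋯ a_{n-1} b^{n-1} aₙ has exactly two distinct factorizations into elements of Lₙ = {a₁, aₙ} ∪ { bⁱ a_{i+1} : 1 ≤ i < n } ∪ { aᵢ bⁱ : 1 ≤ i < n }, namely (a₁)(b a₂)(b² a₃)⋯(b^{n-1} aₙ) and (a₁ b)(a₂ b²)⋯(a_{n-1} b^{n-1})(aₙ). -/

import Mathlib

open Computability
open Fin.NatCast

/-- `l` is a factorization of `x` into elements of `L`. -/
def IsFactorization {α : Type*} (L : Language α) (x : List α) (l : List (List α)) : Prop :=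
  (∀ w ∈ l, w ∈ L) ∧ l.flatten = x

/-- The alphabet `{b, a₁, …, aₙ}` is encoded as `Option (Fin n)`, with `none` playing the
role of `b` and `some (i-1)` playing the role of `aᵢ`.  `Lc n` is the language
`{a₁, aₙ} ∪ { bⁱ a_{i+1} : 1 ≤ i < n } ∪ { aᵢ bⁱ : 1 ≤ i < n }`. -/
def Lc (n : ℕ) [NeZero n] : Language (Option (Fin n)) := show Set (List (Option (Fin n))) from
  {[some ((0 : ℕ) : Fin n)], [some ((n - 1 : ℕ) : Fin n)]} ∪
  {w | ∃ i, 1 ≤ i ∧ i < n ∧ w = List.replicate i none ++ [some ((i : ℕ) : Fin n)]} ∪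
  {w | ∃ i, 1 ≤ i ∧ i < n ∧ w = some ((i - 1 : ℕ) : Fin n) :: List.replicate i none}

/-- The word `a₁ b a₂ b² a₃ b³ ⋯ a_{n-1} b^{n-1} aₙ`. -/
def xc (n : ℕ) [NeZero n] : List (Option (Fin n)) :=
  ((List.range (n - 1)).map
    (fun j => some ((j : ℕ) : Fin n) :: List.replicate (j + 1) none)).flatten ++
    [some ((n - 1 : ℕ) : Fin n)]

/-- The factorization `(a₁)(b a₂)(b² a₃)⋯(b^{n-1} aₙ)`. -/
def fc₁ (n : ℕ) [NeZero n] : List (List (Option (Fin n))) :=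
  [some ((0 : ℕ) : Fin n)] ::
    (List.range (n - 1)).map
      (fun j => List.replicate (j + 1) none ++ [some ((j + 1 : ℕ) : Fin n)])

/-- The factorization `(a₁ b)(a₂ b²)⋯(a_{n-1} b^{n-1})(aₙ)`. -/
def fc₂ (n : ℕ) [NeZero n] : List (List (Option (Fin n))) :=
  ((List.range (n - 1)).map
    (fun j => some ((j : ℕ) : Fin n) :: List.replicate (j + 1) none)) ++
    [[some ((n - 1 : ℕ) : Fin n)]]

lemma rep_eq {α : Type*} : ∀ {i j : ℕ} {a b : α} {u v : List (Option α)},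
    List.replicate i none ++ some a :: u = List.replicate j none ++ some b :: v →
    i = j ∧ a = b ∧ u = v := by
  intro i
  induction i with
  | zero =>
    intro j a b u v h
    cases j with
    | zero => simpa using h
    | succ j => simp [List.replicate_succ] at h
  | succ i ih =>
    intro j a b u v h
    cases j with
    | zero => simp [List.replicate_succ] at h
    | succ j =>
      rw [List.replicate_succ, List.replicate_succ, List.cons_append, List.cons_append,
        List.cons.injEq] at h
      obtain ⟨h1, h2, h3⟩ := ih h.2
      exact ⟨by omega, h2, h3⟩

lemma cast_inj' {n i j : ℕ} [NeZero n] (hi : i < n) (hj : j < n)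
    (h : ((i : ℕ) : Fin n) = ((j : ℕ) : Fin n)) : i = j := by
  have := congrArg Fin.val h
  rwa [Fin.val_cast_of_lt hi, Fin.val_cast_of_lt hj] at this

lemma memLc {n : ℕ} [NeZero n] {w : List (Option (Fin n))} (h : w ∈ Lc n) :
    w = [some ((0 : ℕ) : Fin n)] ∨ w = [some ((n - 1 : ℕ) : Fin n)] ∨
    (∃ i, 1 ≤ i ∧ i < n ∧ w = List.replicate i none ++ [some ((i : ℕ) : Fin n)]) ∨
    (∃ i, 1 ≤ i ∧ i < n ∧ w = some ((i - 1 : ℕ) : Fin n) :: List.replicate i none) := by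
  have h' : w ∈ ({[some ((0 : ℕ) : Fin n)], [some ((n - 1 : ℕ) : Fin n)]} ∪
      {w | ∃ i, 1 ≤ i ∧ i < n ∧ w = List.replicate i none ++ [some ((i : ℕ) : Fin n)]} ∪
      {w | ∃ i, 1 ≤ i ∧ i < n ∧ w = some ((i - 1 : ℕ) : Fin n) :: List.replicate i none} :
      Set (List (Option (Fin n)))) := h
  simpa [Set.mem_union, Set.mem_setOf_eq, Set.mem_insert_iff, or_assoc] using h'

lemma Lc_B {n : ℕ} [NeZero n] {i : ℕ} (h1 : 1 ≤ i) (h2 : i < n) :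
    (List.replicate i (none : Option (Fin n)) ++ [some ((i : ℕ) : Fin n)]) ∈ Lc n :=
  Or.inl (Or.inr ⟨i, h1, h2, rfl⟩)

lemma Lc_A {n : ℕ} [NeZero n] {i : ℕ} (h1 : 1 ≤ i) (h2 : i < n) :
    (some ((i - 1 : ℕ) : Fin n) :: List.replicate i (none : Option (Fin n))) ∈ Lc n :=
  Or.inr ⟨i, h1, h2, rfl⟩

lemma Lc_first {n : ℕ} [NeZero n] : [some ((0 : ℕ) : Fin n)] ∈ Lc n :=
  Or.inl (Or.inl (Or.inl rfl))

lemma Lc_last {n : ℕ} [NeZero n] : [some ((n - 1 : ℕ) : Fin n)] ∈ Lc n :=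
  Or.inl (Or.inl (Or.inr rfl))

lemma Lc_ne_nil {n : ℕ} [NeZero n] {w : List (Option (Fin n))} (h : w ∈ Lc n) : w ≠ [] := by
  rcases memLc h with h | h | ⟨i, h1, h2, h⟩ | ⟨i, h1, h2, h⟩ <;> subst h <;> simp

lemma flatten_nil {n : ℕ} [NeZero n] {l : List (List (Option (Fin n)))}
    (hm : ∀ w ∈ l, w ∈ Lc n) (h : l.flatten = []) : l = [] := by
  cases l with
  | nil => rfl
  | cons w l =>
    exfalso
    rw [List.flatten_cons, List.append_eq_nil_iff] at h
    exact Lc_ne_nil (hm w (by simp)) h.1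

def Sx (n : ℕ) [NeZero n] (j : ℕ) : List (Option (Fin n)) :=
  ((List.range' j (n - 1 - j)).map
    (fun k => some ((k : ℕ) : Fin n) :: List.replicate (k + 1) none)).flatten ++
    [some ((n - 1 : ℕ) : Fin n)]

def Tx (n : ℕ) [NeZero n] (j : ℕ) : List (Option (Fin n)) :=
  List.replicate j none ++ Sx n j

def G1 (n : ℕ) [NeZero n] (j : ℕ) : List (List (Option (Fin n))) :=
  (List.range' j (n - j)).map fun k => List.replicate k none ++ [some ((k : ℕ) : Fin n)]

def G2 (n : ℕ) [NeZero n] (j : ℕ) : List (List (Option (Fin n))) :=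
  ((List.range' j (n - 1 - j)).map
    (fun k => some ((k : ℕ) : Fin n) :: List.replicate (k + 1) none)) ++
    [[some ((n - 1 : ℕ) : Fin n)]]

lemma Sx_succ {n : ℕ} [NeZero n] {j : ℕ} (h : j < n - 1) :
    Sx n j = some ((j : ℕ) : Fin n) :: (List.replicate (j + 1) none ++ Sx n (j + 1)) := by
  obtain ⟨d, hd⟩ : ∃ d, n - 1 - j = d + 1 := ⟨n - 1 - j - 1, by omega⟩
  have hd' : n - 1 - (j + 1) = d := by omega
  simp [Sx, hd, hd', List.range'_succ, List.append_assoc]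

lemma Sx_last (n : ℕ) [NeZero n] : Sx n (n - 1) = [some ((n - 1 : ℕ) : Fin n)] := by
  simp [Sx]

lemma G1_succ {n : ℕ} [NeZero n] {j : ℕ} (h : j < n) :
    G1 n j = (List.replicate j none ++ [some ((j : ℕ) : Fin n)]) :: G1 n (j + 1) := by
  obtain ⟨d, hd⟩ : ∃ d, n - j = d + 1 := ⟨n - j - 1, by omega⟩
  have hd' : n - (j + 1) = d := by omega
  simp [G1, hd, hd', List.range'_succ]

lemma G1_last (n : ℕ) [NeZero n] (h : 1 ≤ n) :
    G1 n (n - 1) = [List.replicate (n - 1) none ++ [some ((n - 1 : ℕ) : Fin n)]] := by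
  have : n - (n - 1) = 1 := by omega
  simp [G1, this]

lemma G2_succ {n : ℕ} [NeZero n] {j : ℕ} (h : j < n - 1) :
    G2 n j = (some ((j : ℕ) : Fin n) :: List.replicate (j + 1) none) :: G2 n (j + 1) := by
  obtain ⟨d, hd⟩ : ∃ d, n - 1 - j = d + 1 := ⟨n - 1 - j - 1, by omega⟩
  have hd' : n - 1 - (j + 1) = d := by omega
  simp [G2, hd, hd', List.range'_succ]

lemma G2_last (n : ℕ) [NeZero n] : G2 n (n - 1) = [[some ((n - 1 : ℕ) : Fin n)]] := by
  simp [G2]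

lemma claimT (n : ℕ) [NeZero n] (hn : 2 ≤ n) :
    ∀ d j, 1 ≤ j → j + d = n - 1 →
      ∀ l, IsFactorization (Lc n) (Tx n j) l ↔ l = G1 n j := by
  intro d
  induction d with
  | zero =>
    intro j hj1 hj2 l
    have hj : j = n - 1 := by omega
    subst hj
    constructor
    · rintro ⟨hm, hf⟩
      cases l with
      | nil =>
        exfalso
        have : Tx n (n - 1) = [] := hf.symm
        simp [Tx, Sx_last] at this
      | cons w l' =>
        rw [List.flatten_cons] at hf
        have hTx : Tx n (n - 1) = List.replicate (n - 1) (none : Option (Fin n)) ++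
            some ((n - 1 : ℕ) : Fin n) :: [] := by
          simp [Tx, Sx_last]
        rw [hTx] at hf
        rcases memLc (hm w (by simp)) with h | h | ⟨i, h1, h2, h⟩ | ⟨i, h1, h2, h⟩ <;> subst h
        · rw [show [some ((0:ℕ) : Fin n)] ++ l'.flatten =
            List.replicate 0 none ++ some ((0:ℕ) : Fin n) :: l'.flatten from rfl] at hf
          have := (rep_eq hf).1; omega
        · rw [show [some ((n-1:ℕ) : Fin n)] ++ l'.flatten =
            List.replicate 0 none ++ some ((n-1:ℕ) : Fin n) :: l'.flatten from rfl] at hf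
          have := (rep_eq hf).1; omega
        · rw [List.append_assoc, List.singleton_append] at hf
          obtain ⟨hi, _, hu⟩ := rep_eq hf
          subst hi
          have : l' = [] := flatten_nil (fun w hw => hm w (by simp [hw])) hu
          subst this
          rw [G1_last n (by omega)]
        · rw [List.cons_append,
            show some ((i-1:ℕ) : Fin n) :: (List.replicate i none ++ l'.flatten) =
            List.replicate 0 none ++ some ((i-1:ℕ) : Fin n) ::
              (List.replicate i none ++ l'.flatten) from rfl] at hf
          have := (rep_eq hf).1; omega
    · rintro rfl
      rw [G1_last n (by omega)]
      refine ⟨?_, ?_⟩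
      · intro w hw
        simp only [List.mem_singleton] at hw
        subst hw
        exact Lc_B (by omega) (by omega)
      · simp [Tx, Sx_last]
  | succ d ih =>
    intro j hj1 hj2 l
    have hjlt : j < n - 1 := by omega
    have hTx : Tx n j = List.replicate j (none : Option (Fin n)) ++
        some ((j : ℕ) : Fin n) :: (List.replicate (j + 1) none ++ Sx n (j + 1)) := by
      rw [Tx, Sx_succ hjlt]
    constructor
    · rintro ⟨hm, hf⟩
      cases l with
      | nil =>
        exfalso
        have : Tx n j = [] := hf.symm
        rw [hTx] at this
        simp at this
      | cons w l' =>
        rw [List.flatten_cons, hTx] at hf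
        rcases memLc (hm w (by simp)) with h | h | ⟨i, h1, h2, h⟩ | ⟨i, h1, h2, h⟩ <;> subst h
        · rw [show [some ((0:ℕ) : Fin n)] ++ l'.flatten =
            List.replicate 0 none ++ some ((0:ℕ) : Fin n) :: l'.flatten from rfl] at hf
          have := (rep_eq hf).1; omega
        · rw [show [some ((n-1:ℕ) : Fin n)] ++ l'.flatten =
            List.replicate 0 none ++ some ((n-1:ℕ) : Fin n) :: l'.flatten from rfl] at hf
          have := (rep_eq hf).1; omega
        · rw [List.append_assoc, List.singleton_append] at hf
          obtain ⟨hi, _, hu⟩ := rep_eq hf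
          subst hi
          have : l' = G1 n (i + 1) :=
            (ih (i + 1) (by omega) (by omega) l').1 ⟨fun w hw => hm w (by simp [hw]), hu⟩
          subst this
          rw [G1_succ (show i < n by omega)]
        · rw [List.cons_append,
            show some ((i-1:ℕ) : Fin n) :: (List.replicate i none ++ l'.flatten) =
            List.replicate 0 none ++ some ((i-1:ℕ) : Fin n) ::
              (List.replicate i none ++ l'.flatten) from rfl] at hf
          have := (rep_eq hf).1; omega
    · rintro rfl
      rw [G1_succ (show j < n by omega)]
      obtain ⟨hm', hf'⟩ := (ih (j + 1) (by omega) (by omega) (G1 n (j + 1))).2 rfl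
      refine ⟨?_, ?_⟩
      · intro w hw
        rcases List.mem_cons.1 hw with h | h
        · subst h; exact Lc_B (by omega) (by omega)
        · exact hm' w h
      · rw [List.flatten_cons, hf', hTx, Tx]
        simp [List.append_assoc]

lemma claimS (n : ℕ) [NeZero n] (hn : 2 ≤ n) :
    ∀ d j, 1 ≤ j → j + d = n - 1 →
      ∀ l, IsFactorization (Lc n) (Sx n j) l ↔ l = G2 n j := by
  intro d
  induction d with
  | zero =>
    intro j hj1 hj2 l
    have hj : j = n - 1 := by omega
    subst hj
    constructor
    · rintro ⟨hm, hf⟩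
      cases l with
      | nil => exfalso; rw [Sx_last] at hf; simp at hf
      | cons w l' =>
        rw [List.flatten_cons, Sx_last] at hf
        rcases memLc (hm w (by simp)) with h | h | ⟨i, h1, h2, h⟩ | ⟨i, h1, h2, h⟩ <;> subst h
        · exfalso
          rw [List.singleton_append, List.cons.injEq] at hf
          have := cast_inj' (by omega) (by omega) (Option.some.inj hf.1)
          omega
        · rw [List.singleton_append, List.cons.injEq] at hf
          have : l' = [] := flatten_nil (fun w hw => hm w (by simp [hw])) hf.2
          subst this
          rw [G2_last]
        · exfalso
          rw [List.append_assoc, List.singleton_append,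
            show ([some ((n-1:ℕ) : Fin n)] : List (Option (Fin n))) =
              List.replicate 0 none ++ some ((n-1:ℕ) : Fin n) :: [] from rfl] at hf
          have := (rep_eq hf).1; omega
        · exfalso
          rw [List.cons_append, List.cons.injEq] at hf
          have hi : i - 1 = n - 1 := cast_inj' (by omega) (by omega) (Option.some.inj hf.1)
          omega
    · rintro rfl
      rw [G2_last]
      exact ⟨by rintro w hw; simp only [List.mem_singleton] at hw; subst hw; exact Lc_last,
        by simp [Sx_last]⟩
  | succ d ih =>
    intro j hj1 hj2 l
    have hjlt : j < n - 1 := by omega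
    have hSx := Sx_succ (n := n) hjlt
    constructor
    · rintro ⟨hm, hf⟩
      cases l with
      | nil => exfalso; rw [hSx] at hf; simp at hf
      | cons w l' =>
        rw [List.flatten_cons, hSx] at hf
        rcases memLc (hm w (by simp)) with h | h | ⟨i, h1, h2, h⟩ | ⟨i, h1, h2, h⟩ <;> subst h
        · exfalso
          rw [List.singleton_append, List.cons.injEq] at hf
          have := cast_inj' (by omega) (by omega) (Option.some.inj hf.1)
          omega
        · exfalso
          rw [List.singleton_append, List.cons.injEq] at hf
          have := cast_inj' (by omega) (by omega) (Option.some.inj hf.1)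
          omega
        · exfalso
          rw [List.append_assoc, List.singleton_append,
            show some ((j:ℕ) : Fin n) :: (List.replicate (j+1) none ++ Sx n (j+1)) =
              List.replicate 0 none ++ some ((j:ℕ) : Fin n) ::
                (List.replicate (j+1) none ++ Sx n (j+1)) from rfl] at hf
          have := (rep_eq hf).1; omega
        · rw [List.cons_append, List.cons.injEq] at hf
          have hi : i - 1 = j := cast_inj' (by omega) (by omega) (Option.some.inj hf.1)
          have hi' : i = j + 1 := by omega
          subst hi'
          have htail := hf.2
          rw [List.append_cancel_left_eq] at htail
          have : l' = G2 n (j + 1) :=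
            (ih (j + 1) (by omega) (by omega) l').1 ⟨fun w hw => hm w (by simp [hw]), htail⟩
          subst this
          rw [G2_succ hjlt, hi]
    · rintro rfl
      rw [G2_succ hjlt]
      obtain ⟨hm', hf'⟩ := (ih (j + 1) (by omega) (by omega) (G2 n (j + 1))).2 rfl
      refine ⟨?_, ?_⟩
      · intro w hw
        rcases List.mem_cons.1 hw with h | h
        · subst h
          have := Lc_A (n := n) (i := j + 1) (by omega) (by omega)
          simpa using this
        · exact hm' w h
      · rw [List.flatten_cons, hf', hSx, List.cons_append]

lemma xc_eq (n : ℕ) [NeZero n] : xc n = Sx n 0 := by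
  simp [xc, Sx, List.range_eq_range']

lemma fc1_eq (n : ℕ) [NeZero n] : fc₁ n = [some ((0 : ℕ) : Fin n)] :: G1 n 1 := by
  rw [fc₁, G1]
  congr 1
  rw [show n - 1 = n - 1 from rfl, List.range'_eq_map_range, List.map_map]
  apply List.map_congr_left
  intro j hj
  simp [Nat.add_comm 1 j]

lemma fc2_eq (n : ℕ) [NeZero n] : fc₂ n = G2 n 0 := by
  simp [fc₂, G2, List.range_eq_range']

/-- For `n ≥ 2`, the word `a₁ b a₂ b² ⋯ a_{n-1} b^{n-1} aₙ` has exactly two distinct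
factorizations into elements of `Lₙ`, namely `(a₁)(b a₂)(b² a₃)⋯(b^{n-1} aₙ)` and
`(a₁ b)(a₂ b²)⋯(a_{n-1} b^{n-1})(aₙ)`. -/
theorem stmt5 (n : ℕ) [NeZero n] (hn : 2 ≤ n) :
    (∀ l, IsFactorization (Lc n) (xc n) l ↔ l = fc₁ n ∨ l = fc₂ n) ∧ fc₁ n ≠ fc₂ n := by
  have hS0 : Sx n 0 = some ((0 : ℕ) : Fin n) :: (List.replicate 1 none ++ Sx n 1) :=
    Sx_succ (by omega)
  constructor
  · intro l
    constructor
    · rintro ⟨hm, hf⟩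
      rw [xc_eq] at hf
      cases l with
      | nil => exfalso; rw [hS0] at hf; simp at hf
      | cons w l' =>
        rw [List.flatten_cons, hS0] at hf
        rcases memLc (hm w (by simp)) with h | h | ⟨i, h1, h2, h⟩ | ⟨i, h1, h2, h⟩ <;> subst h
        · left
          rw [List.singleton_append, List.cons.injEq] at hf
          have : l' = G1 n 1 := (claimT n hn (n - 2) 1 (by omega) (by omega) l').1
            ⟨fun w hw => hm w (by simp [hw]), hf.2⟩
          rw [fc1_eq, this]
        · exfalso
          rw [List.singleton_append, List.cons.injEq] at hf
          have := cast_inj' (by omega) (by omega) (Option.some.inj hf.1)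
          omega
        · exfalso
          rw [List.append_assoc, List.singleton_append,
            show some ((0:ℕ) : Fin n) :: (List.replicate 1 none ++ Sx n 1) =
              List.replicate 0 none ++ some ((0:ℕ) : Fin n) ::
                (List.replicate 1 none ++ Sx n 1) from rfl] at hf
          have := (rep_eq hf).1; omega
        · right
          rw [List.cons_append, List.cons.injEq] at hf
          have hi : i - 1 = 0 := cast_inj' (by omega) (by omega) (Option.some.inj hf.1)
          have hi' : i = 1 := by omega
          subst hi'
          have htail := hf.2
          rw [List.append_cancel_left_eq] at htail
          have : l' = G2 n 1 := (claimS n hn (n - 2) 1 (by omega) (by omega) l').1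
            ⟨fun w hw => hm w (by simp [hw]), htail⟩
          rw [fc2_eq, this, G2_succ (show 0 < n - 1 by omega)]
    · rintro (rfl | rfl)
      · rw [fc1_eq]
        obtain ⟨hm', hf'⟩ := (claimT n hn (n - 2) 1 (by omega) (by omega) (G1 n 1)).2 rfl
        refine ⟨?_, ?_⟩
        · intro w hw
          rcases List.mem_cons.1 hw with h | h
          · subst h; exact Lc_first
          · exact hm' w h
        · rw [List.flatten_cons, hf', xc_eq, hS0, Tx, List.singleton_append]
      · rw [fc2_eq, G2_succ (show 0 < n - 1 by omega)]
        obtain ⟨hm', hf'⟩ := (claimS n hn (n - 2) 1 (by omega) (by omega) (G2 n 1)).2 rfl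
        refine ⟨?_, ?_⟩
        · intro w hw
          rcases List.mem_cons.1 hw with h | h
          · subst h
            have := Lc_A (n := n) (i := 1) (by omega) (by omega)
            simpa using this
          · exact hm' w h
        · rw [List.flatten_cons, hf', xc_eq, hS0, List.cons_append]
  · rw [fc1_eq, fc2_eq, G2_succ (show 0 < n - 1 by omega)]
    intro h
    rw [List.cons.injEq] at h
    simpa using congrArg List.length h.1
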